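/- Let μ be a finite measure on ℝ and 0 < ξ < 1 with ∫ 1/((ξe^η)^d + ξ^d) dμ(η) = 1/2 for all integers d ≥ 0. Let η₀ = ln(1/ξ). Then μ({η : η < η₀}) = 0 and μ({η₀}) = 1/2. -/

import Mathlib

open MeasureTheory Filter

theorem stmt_16 (μ : Measure ℝ) [IsFiniteMeasure μ] (ξ : ℝ) (hξ0 : 0 < ξ) (hξ1 : ξ < 1)
    (hint : ∀ d : ℕ, ∫ η, 1 / ((ξ * Real.exp η) ^ d + ξ ^ d) ∂μ = 1 / 2)
    (η₀ : ℝ) (hη₀ : η₀ = Real.log (1 / ξ)) :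
    μ {η : ℝ | η < η₀} = 0 ∧ μ {η₀} = 1 / 2 := by
  have hexp : Real.exp η₀ = 1 / ξ := by rw [hη₀, Real.exp_log (by positivity)]
  have hr : ∀ η : ℝ, ξ * Real.exp η = Real.exp (η - η₀) := by
    intro η
    rw [Real.exp_sub, hexp]
    field_simp
  have hD : ∀ (d : ℕ) (η : ℝ), 0 < (ξ * Real.exp η) ^ d + ξ ^ d := by
    intro d η
    have h1 : 0 < ξ * Real.exp η := by positivity
    positivity
  have hcont : ∀ d : ℕ, Continuous fun η : ℝ => 1 / ((ξ * Real.exp η) ^ d + ξ ^ d) := by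
    intro d
    apply Continuous.div continuous_const
      (((continuous_const.mul Real.continuous_exp).pow d).add continuous_const)
    intro η; exact (hD d η).ne'
  have hInt : ∀ d : ℕ, Integrable (fun η : ℝ => 1 / ((ξ * Real.exp η) ^ d + ξ ^ d)) μ := by
    intro d
    apply Integrable.mono' (integrable_const ((ξ ^ d)⁻¹)) (hcont d).aestronglyMeasurable
    apply Filter.Eventually.of_forall
    intro η
    rw [Real.norm_eq_abs, abs_of_nonneg (le_of_lt (by positivity))]
    rw [one_div]
    apply inv_anti₀ (by positivity)
    have : 0 ≤ (ξ * Real.exp η) ^ d := by positivity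
    linarith
  have hξpow : Tendsto (fun d : ℕ => ξ ^ d) atTop (nhds 0) :=
    tendsto_pow_atTop_nhds_zero_of_lt_one hξ0.le hξ1
  -- Part 1
  have key : ∀ ε : ℝ, 0 < ε → μ (Set.Iic (η₀ - ε)) = 0 := by
    intro ε hε
    set S := Set.Iic (η₀ - ε) with hS
    have hbound : ∀ d : ℕ, (μ S).toReal ≤ 1 / 2 * (Real.exp (-ε) ^ d + ξ ^ d) := by
      intro d
      have hc : 0 < Real.exp (-ε) ^ d + ξ ^ d := by positivity
      have h1 : ∫ _η in S, 1 / (Real.exp (-ε) ^ d + ξ ^ d) ∂μ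
          ≤ ∫ η in S, 1 / ((ξ * Real.exp η) ^ d + ξ ^ d) ∂μ := by
        apply setIntegral_mono_on ((integrableOn_const_iff).mpr (Or.inr (measure_lt_top μ S)))
          ((hInt d).integrableOn) measurableSet_Iic
        intro η hη
        apply one_div_le_one_div_of_le (hD d η)
        have hle : ξ * Real.exp η ≤ Real.exp (-ε) := by
          rw [hr η]
          exact Real.exp_le_exp.mpr (by simpa [Set.mem_Iic] using by linarith [hη.out])
        have := pow_le_pow_left₀ (by positivity : (0:ℝ) ≤ ξ * Real.exp η) hle d
        linarith
      have h2 : ∫ η in S, 1 / ((ξ * Real.exp η) ^ d + ξ ^ d) ∂μ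
          ≤ ∫ η, 1 / ((ξ * Real.exp η) ^ d + ξ ^ d) ∂μ := by
        apply setIntegral_le_integral (hInt d)
        exact Filter.Eventually.of_forall fun η => le_of_lt (by positivity)
      rw [setIntegral_const, smul_eq_mul, measureReal_def] at h1
      have h3 : (μ S).toReal * (1 / (Real.exp (-ε) ^ d + ξ ^ d)) ≤ 1 / 2 := by
        rw [hint d] at h2; linarith
      rw [mul_one_div, div_le_iff₀ hc] at h3
      linarith
    have hlim : Tendsto (fun d : ℕ => 1 / 2 * (Real.exp (-ε) ^ d + ξ ^ d)) atTop (nhds 0) := by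
      have h1 : Tendsto (fun d : ℕ => Real.exp (-ε) ^ d) atTop (nhds 0) :=
        tendsto_pow_atTop_nhds_zero_of_lt_one (Real.exp_nonneg _)
          (Real.exp_lt_one_iff.mpr (by linarith))
      simpa using (h1.add hξpow).const_mul (1 / 2 : ℝ)
    have h0 : (μ S).toReal ≤ 0 := ge_of_tendsto' hlim hbound
    have h0' : (μ S).toReal = 0 := le_antisymm h0 ENNReal.toReal_nonneg
    rcases ENNReal.toReal_eq_zero_iff _ |>.mp h0' with h | h
    · exact h
    · exact absurd h (measure_ne_top μ S)
  have hset : {η : ℝ | η < η₀} = ⋃ n : ℕ, Set.Iic (η₀ - 1 / (n + 1)) := by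
    ext η
    simp only [Set.mem_setOf_eq, Set.mem_iUnion, Set.mem_Iic]
    constructor
    · intro h
      obtain ⟨n, hn⟩ := exists_nat_one_div_lt (sub_pos.mpr h)
      exact ⟨n, by linarith⟩
    · rintro ⟨n, hn⟩
      have : (0:ℝ) < 1 / (n + 1) := by positivity
      linarith
  have part1 : μ {η : ℝ | η < η₀} = 0 := by
    rw [hset]
    exact measure_iUnion_null fun n => key _ (by positivity)
  refine ⟨part1, ?_⟩
  -- Part 2
  have hae : ∀ᵐ η ∂μ, η₀ ≤ η := by
    rw [ae_iff]
    simpa [not_le] using part1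
  have hξη₀ : ξ * Real.exp η₀ = 1 := by
    rw [hexp]; field_simp
  have hDCT : Tendsto (fun d : ℕ => ∫ η, 1 / ((ξ * Real.exp η) ^ d + ξ ^ d) ∂μ) atTop
      (nhds (∫ η, Set.indicator {η₀} (fun _ => (1:ℝ)) η ∂μ)) := by
    apply tendsto_integral_of_dominated_convergence (fun _ => (1:ℝ))
      (fun d => (hcont d).aestronglyMeasurable) (integrable_const 1)
    · intro d
      filter_upwards [hae] with η hη
      rw [Real.norm_eq_abs, abs_of_nonneg (le_of_lt (by positivity))]
      rw [div_le_one (hD d η)]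
      have h1 : (1:ℝ) ≤ (ξ * Real.exp η) ^ d := by
        have : (1:ℝ) ≤ ξ * Real.exp η := by
          rw [hr η]
          calc (1:ℝ) = Real.exp 0 := Real.exp_zero.symm
          _ ≤ Real.exp (η - η₀) := Real.exp_le_exp.mpr (by linarith)
        exact one_le_pow₀ this
      have : (0:ℝ) ≤ ξ ^ d := by positivity
      linarith
    · filter_upwards [hae] with η hη
      rcases eq_or_lt_of_le hη with heq | hlt
      · subst heq
        simp only [Set.indicator_of_mem (Set.mem_singleton η₀), hξη₀, one_pow]
        have h1 : Tendsto (fun d : ℕ => 1 + ξ ^ d) atTop (nhds 1) := by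
          simpa using tendsto_const_nhds.add hξpow
        simpa [one_div] using h1.inv₀ one_ne_zero
      · have hη' : η ∉ ({η₀} : Set ℝ) := by simp [Set.mem_singleton_iff]; linarith
        rw [Set.indicator_of_notMem hη']
        have h1 : (1:ℝ) < ξ * Real.exp η := by
          rw [hr η]
          calc (1:ℝ) = Real.exp 0 := Real.exp_zero.symm
          _ < Real.exp (η - η₀) := Real.exp_lt_exp.mpr (by linarith)
        have h2 : Tendsto (fun d : ℕ => (ξ * Real.exp η) ^ d + ξ ^ d) atTop atTop :=
          (tendsto_pow_atTop_atTop_of_one_lt h1).atTop_add hξpow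
        simpa [one_div, Pi.inv_def] using h2.inv_tendsto_atTop
  have h2 : ∫ η, Set.indicator {η₀} (fun _ => (1:ℝ)) η ∂μ = (μ {η₀}).toReal := by
    rw [integral_indicator (measurableSet_singleton η₀), setIntegral_const, smul_eq_mul, mul_one, measureReal_def]
  have h' : Tendsto (fun d : ℕ => ∫ η, 1 / ((ξ * Real.exp η) ^ d + ξ ^ d) ∂μ) atTop
      (nhds (1 / 2)) := by
    simp only [hint]; exact tendsto_const_nhds
  have h3 : (μ {η₀}).toReal = 1 / 2 := h2 ▸ tendsto_nhds_unique hDCT h'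
  have h4 : ((1 : ENNReal) / 2).toReal = (1:ℝ) / 2 := by simp
  exact (ENNReal.toReal_eq_toReal_iff' (measure_ne_top μ _) (by norm_num)).mp (by rw [h3, h4])
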